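/- Let G be a graph on n ≥ 2 vertices and let G′ be the graph obtained from G by subdividing every edge of G exactly once. Then G has a Hamiltonian path if and only if G′ contains an induced path on 2n−1 vertices (equivalently, an induced path of length 2n−2). -/

import Mathlib

open SimpleGraph

def subdiv {V : Type} (G : SimpleGraph V) : SimpleGraph (V ⊕ G.edgeSet) :=
  SimpleGraph.fromRel (fun a b =>
    match a, b with
    | Sum.inl u, Sum.inr e => u ∈ (e : Sym2 V)
    | _, _ => False)

def HasHamPath {V : Type} (G : SimpleGraph V) : Prop :=
  ∃ (u v : V) (w : G.Walk u v), w.IsPath ∧ ∀ x : V, x ∈ w.support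

lemma subdiv_adj_ll {V : Type} (G : SimpleGraph V) (u v : V) :
    ¬ (subdiv G).Adj (Sum.inl u) (Sum.inl v) := by
  simp [subdiv, fromRel_adj]

lemma subdiv_adj_rr {V : Type} (G : SimpleGraph V) (e e' : G.edgeSet) :
    ¬ (subdiv G).Adj (Sum.inr e) (Sum.inr e') := by
  simp [subdiv, fromRel_adj]

lemma subdiv_adj_lr {V : Type} (G : SimpleGraph V) (u : V) (e : G.edgeSet) :
    (subdiv G).Adj (Sum.inl u) (Sum.inr e) ↔ u ∈ (e : Sym2 V) := by
  simp [subdiv, fromRel_adj]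

lemma adj_of_mem_edge {V : Type} (G : SimpleGraph V) (e : G.edgeSet) {x y : V}
    (hx : x ∈ (e : Sym2 V)) (hy : y ∈ (e : Sym2 V)) (hne : x ≠ y) : G.Adj x y := by
  have he : (e : Sym2 V) = s(x, y) :=
    Sym2.eq_of_ne_mem hne hx hy (Sym2.mem_mk_left _ _) (Sym2.mem_mk_right _ _)
  exact (G.mem_edgeSet).mp (he ▸ e.2)

lemma chainWalk {V : Type} (G : SimpleGraph V) (v : ℕ → V) :
    ∀ k, (∀ i, i < k → G.Adj (v i) (v (i+1))) →
    ∃ w : G.Walk (v 0) (v k), w.support = (List.range (k+1)).map v := by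
  intro k
  induction k with
  | zero => exact fun _ => ⟨Walk.nil, by simp [List.range_succ]⟩
  | succ k ih =>
    intro h
    obtain ⟨w, hw⟩ := ih (fun i hi => h i (by omega))
    refine ⟨w.concat (h k (by omega)), ?_⟩
    rw [Walk.support_concat, hw, List.range_succ]
    simp [List.range_succ, List.concat_eq_append]

lemma ham_of_chain {V : Type} [Fintype V] (G : SimpleGraph V) (v : ℕ → V) (n : ℕ)
    (hn : 1 ≤ n)
    (hinj : ∀ i < n, ∀ j < n, v i = v j → i = j)
    (hsurj : ∀ x : V, ∃ i, i < n ∧ v i = x)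
    (hadj : ∀ i, i + 1 < n → G.Adj (v i) (v (i+1))) : HasHamPath G := by
  obtain ⟨w, hw⟩ := chainWalk G v (n-1) (fun i hi => hadj i (by omega))
  refine ⟨v 0, v (n-1), w, ?_, ?_⟩
  · rw [Walk.isPath_def, hw]
    refine List.Nodup.map_on ?_ List.nodup_range
    intro x hx y hy hxy
    simp only [List.mem_range] at hx hy
    exact hinj x (by omega) y (by omega) hxy
  · intro x
    obtain ⟨i, hi, hvi⟩ := hsurj x
    rw [hw]
    exact List.mem_map.mpr ⟨i, List.mem_range.mpr (by omega), hvi⟩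

lemma surj_of_inj {V : Type} [Fintype V] {n : ℕ} (hcard : Fintype.card V = n)
    (v : ℕ → V) (hinj : ∀ i < n, ∀ j < n, v i = v j → i = j) :
    ∀ x : V, ∃ i, i < n ∧ v i = x := by
  intro x
  have hg : Function.Injective (fun i : Fin n => v i.val) := by
    intro i j hij
    exact Fin.ext (hinj i.val i.isLt j.val j.isLt hij)
  have hb : Function.Bijective (fun i : Fin n => v i.val) :=
    (Fintype.bijective_iff_injective_and_card _).mpr ⟨hg, by simp [hcard]⟩
  obtain ⟨i, hi⟩ := hb.surjective x
  exact ⟨i.val, i.isLt, hi⟩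

lemma bwd_dir {V : Type} [Fintype V] (G : SimpleGraph V) (hn : 2 ≤ Fintype.card V)
    (h : Nonempty (pathGraph (2 * Fintype.card V - 1) ↪g subdiv G)) : HasHamPath G := by
  classical
  obtain ⟨f⟩ := h
  set n := Fintype.card V with hn'
  have hnv : Nonempty V := Fintype.card_pos_iff.mp (by omega)
  have hm : 0 < 2*n-1 := by omega
  have hadjf : ∀ (k : ℕ) (h1 : k < 2*n-1) (h2 : k+1 < 2*n-1),
      (subdiv G).Adj (f ⟨k, h1⟩) (f ⟨k+1, h2⟩) := by
    intro k h1 h2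
    exact f.map_rel_iff.mpr (by rw [pathGraph_adj]; left; rfl)
  -- alternation
  set b : Bool := (f ⟨0, hm⟩).isLeft with hb
  have halt : ∀ (k : ℕ) (h1 : k < 2*n-1),
      (f ⟨k, h1⟩).isLeft = if k % 2 = 0 then b else !b := by
    intro k
    induction k with
    | zero => intro h1; simp [hb]
    | succ k ih =>
      intro h1
      have hk : k < 2*n-1 := by omega
      have hadj := hadjf k hk h1
      have hstep : (f ⟨k+1, h1⟩).isLeft = !(f ⟨k, hk⟩).isLeft := by
        cases hx : f ⟨k, hk⟩ <;> cases hy : f ⟨k+1, h1⟩ <;> rw [hx, hy] at hadj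
        · exact absurd hadj (subdiv_adj_ll G _ _)
        · simp
        · simp
        · exact absurd hadj (subdiv_adj_rr G _ _)
      rw [hstep, ih hk]
      rcases Nat.even_or_odd k with he | ho
      · have h2 : k % 2 = 0 := Nat.even_iff.mp he
        have h3 : ¬ (k+1) % 2 = 0 := by omega
        simp [h2, h3]
      · have h2 : ¬ k % 2 = 0 := by have := Nat.odd_iff.mp ho; omega
        have h3 : (k+1) % 2 = 0 := by have := Nat.odd_iff.mp ho; omega
        simp [h2, h3]
  have hfinj : ∀ (k l : ℕ) (h1 : k < 2*n-1) (h2 : l < 2*n-1),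
      f ⟨k, h1⟩ = f ⟨l, h2⟩ → k = l := by
    intro k l h1 h2 he
    have := f.injective he
    simpa using this
  cases hbv : b
  · -- b = false : odd positions are inl
    have hodd : ∀ (i : ℕ) (h1 : 2*i+1 < 2*n-1), ∃ u, f ⟨2*i+1, h1⟩ = Sum.inl u := by
      intro i h1
      have := halt (2*i+1) h1
      rw [if_neg (by omega), hbv] at this
      exact Sum.isLeft_iff.mp (by simp [this])
    have heven : ∀ (i : ℕ) (h1 : 2*i < 2*n-1), ∃ e, f ⟨2*i, h1⟩ = Sum.inr e := by
      intro i h1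
      have := halt (2*i) h1
      rw [if_pos (by omega), hbv] at this
      exact Sum.isRight_iff.mp (Sum.not_isLeft.mp (by simp [this]))
    set u : ℕ → V := fun i => if h : 2*i+1 < 2*n-1 then (hodd i h).choose else Classical.arbitrary V
      with hudef
    have hu : ∀ (i : ℕ) (h1 : 2*i+1 < 2*n-1), f ⟨2*i+1, h1⟩ = Sum.inl (u i) := by
      intro i h1
      rw [hudef]; simp only [dif_pos h1]
      exact (hodd i h1).choose_spec
    obtain ⟨e0, he0⟩ := heven 0 hm
    have hu0 : u 0 ∈ (e0 : Sym2 V) := by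
      have := hadjf 0 hm (by omega)
      rw [he0] at this
      rw [show (⟨0+1, by omega⟩ : Fin (2*n-1)) = ⟨2*0+1, by omega⟩ by rfl, hu 0 (by omega)] at this
      exact (subdiv_adj_lr G _ _).mp this.symm
    obtain ⟨w, hw⟩ := Sym2.mem_iff_exists.mp hu0
    have hadjw : G.Adj (u 0) w := (G.mem_edgeSet).mp (hw ▸ e0.2)
    have hwne : w ≠ u 0 := (G.ne_of_adj hadjw).symm
    have hwnotin : ∀ (j : ℕ), 2*j+1 < 2*n-1 → w ≠ u j := by
      intro j hj hwj
      have hadj : (subdiv G).Adj (f ⟨2*j+1, hj⟩) (f ⟨0, hm⟩) := by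
        rw [hu j hj, he0, ← hwj]
        exact (subdiv_adj_lr G _ _).mpr (hw ▸ Sym2.mem_mk_right _ _)
      have := f.map_rel_iff.mp hadj
      rw [pathGraph_adj] at this
      simp only [] at this
      have hj0 : j = 0 := by omega
      rw [hj0] at hwj
      exact hwne hwj
    set v : ℕ → V := fun i => if i = 0 then w else u (i-1) with hvdef
    have hinj : ∀ i < n, ∀ j < n, v i = v j → i = j := by
      intro i hi j hj hij
      rw [hvdef] at hij
      match i, j with
      | 0, 0 => rfl
      | 0, (l+1) =>
        simp only [if_pos rfl, if_neg (Nat.succ_ne_zero l)] at hij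
        exact absurd (by simpa using hij) (hwnotin l (by omega))
      | (k+1), 0 =>
        simp only [if_pos rfl, if_neg (Nat.succ_ne_zero k)] at hij
        exact absurd (by simpa using hij.symm) (hwnotin k (by omega))
      | (k+1), (l+1) =>
        simp only [if_neg (Nat.succ_ne_zero k), if_neg (Nat.succ_ne_zero l)] at hij
        have hk : 2*k+1 < 2*n-1 := by omega
        have hl : 2*l+1 < 2*n-1 := by omega
        have : f ⟨2*k+1, hk⟩ = f ⟨2*l+1, hl⟩ := by
          rw [hu k hk, hu l hl]
          simpa using hij
        have := hfinj _ _ hk hl this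
        omega
    refine ham_of_chain G v n (by omega) hinj (surj_of_inj hn'.symm v hinj) ?_
    intro i hi
    match i with
    | 0 =>
      have : v 0 = w := by simp [hvdef]
      have h1 : v 1 = u 0 := by simp [hvdef]
      rw [this, h1]
      exact hadjw.symm
    | (k+1) =>
      have hk1 : v (k+1) = u k := by simp [hvdef]
      have hk2 : v (k+2) = u (k+1) := by simp [hvdef]
      rw [hk1, hk2]
      have hb1 : 2*k+1 < 2*n-1 := by omega
      have hb2 : 2*k+2 < 2*n-1 := by omega
      have hb3 : 2*k+3 < 2*n-1 := by omega
      obtain ⟨e, he⟩ := heven (k+1) (by omega)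
      have hmem1 : u k ∈ (e : Sym2 V) := by
        have := hadjf (2*k+1) hb1 hb2
        rw [hu k hb1] at this
        rw [show (⟨2*k+1+1, hb2⟩ : Fin (2*n-1)) = ⟨2*(k+1), by omega⟩ by rfl, he] at this
        exact (subdiv_adj_lr G _ _).mp this
      have hmem2 : u (k+1) ∈ (e : Sym2 V) := by
        have := hadjf (2*k+2) hb2 hb3
        rw [show (⟨2*k+2, hb2⟩ : Fin (2*n-1)) = ⟨2*(k+1), by omega⟩ by rfl, he] at this
        rw [show (⟨2*k+2+1, hb3⟩ : Fin (2*n-1)) = ⟨2*(k+1)+1, by omega⟩ by rfl,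
          hu (k+1) (by omega)] at this
        exact (subdiv_adj_lr G _ _).mp this.symm
      have hne : u k ≠ u (k+1) := by
        intro hc
        have : f ⟨2*k+1, hb1⟩ = f ⟨2*(k+1)+1, by omega⟩ := by
          rw [hu k hb1, hu (k+1) (by omega), hc]
        have := hfinj _ _ _ _ this
        omega
      exact adj_of_mem_edge G e hmem1 hmem2 hne
  · -- b = true : even positions are inl
    have heven : ∀ (i : ℕ) (h1 : 2*i < 2*n-1), ∃ u, f ⟨2*i, h1⟩ = Sum.inl u := by
      intro i h1
      have := halt (2*i) h1
      rw [if_pos (by omega), hbv] at this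
      exact Sum.isLeft_iff.mp (by simp [this])
    have hoddr : ∀ (i : ℕ) (h1 : 2*i+1 < 2*n-1), ∃ e, f ⟨2*i+1, h1⟩ = Sum.inr e := by
      intro i h1
      have := halt (2*i+1) h1
      rw [if_neg (by omega), hbv] at this
      exact Sum.isRight_iff.mp (Sum.not_isLeft.mp (by simp [this]))
    set v : ℕ → V := fun i => if h : 2*i < 2*n-1 then (heven i h).choose else Classical.arbitrary V
      with hvdef
    have hv : ∀ (i : ℕ) (h1 : 2*i < 2*n-1), f ⟨2*i, h1⟩ = Sum.inl (v i) := by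
      intro i h1
      rw [hvdef]; simp only [dif_pos h1]
      exact (heven i h1).choose_spec
    have hinj : ∀ i < n, ∀ j < n, v i = v j → i = j := by
      intro i hi j hj hij
      have h1 : 2*i < 2*n-1 := by omega
      have h2 : 2*j < 2*n-1 := by omega
      have : f ⟨2*i, h1⟩ = f ⟨2*j, h2⟩ := by rw [hv i h1, hv j h2, hij]
      have := hfinj _ _ h1 h2 this
      omega
    refine ham_of_chain G v n (by omega) hinj (surj_of_inj hn'.symm v hinj) ?_
    intro i hi
    have hb1 : 2*i < 2*n-1 := by omega
    have hb2 : 2*i+1 < 2*n-1 := by omega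
    have hb3 : 2*i+2 < 2*n-1 := by omega
    obtain ⟨e, he⟩ := hoddr i hb2
    have hmem1 : v i ∈ (e : Sym2 V) := by
      have := hadjf (2*i) hb1 hb2
      rw [hv i hb1, he] at this
      exact (subdiv_adj_lr G _ _).mp this
    have hmem2 : v (i+1) ∈ (e : Sym2 V) := by
      have := hadjf (2*i+1) hb2 hb3
      rw [he] at this
      rw [show (⟨2*i+1+1, hb3⟩ : Fin (2*n-1)) = ⟨2*(i+1), by omega⟩ by rfl,
        hv (i+1) (by omega)] at this
      exact (subdiv_adj_lr G _ _).mp this.symm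
    have hne : v i ≠ v (i+1) := by
      intro hc
      have : f ⟨2*i, hb1⟩ = f ⟨2*(i+1), by omega⟩ := by
        rw [hv i hb1, hv (i+1) (by omega), hc]
      have := hfinj _ _ _ _ this
      omega
    exact adj_of_mem_edge G e hmem1 hmem2 hne

lemma walk_edges_getElem {V : Type} {G : SimpleGraph V} {a b : V} (p : G.Walk a b) :
    ∀ (k : ℕ) (hk : k < p.edges.length) (h1 : k < p.support.length) (h2 : k+1 < p.support.length),
      p.edges[k] = s(p.support[k], p.support[k+1]) := by
  induction p with
  | nil => simp
  | cons h q ih =>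
    intro k hk h1 h2
    cases k with
    | zero =>
      simp [Walk.support_cons, Walk.edges_cons]
    | succ k =>
      simp only [Walk.edges_cons, Walk.support_cons, List.getElem_cons_succ]
      apply ih

set_option maxHeartbeats 1000000 in
lemma fwd_dir {V : Type} [Fintype V] (G : SimpleGraph V) (hn : 2 ≤ Fintype.card V)
    (h : HasHamPath G) : Nonempty (pathGraph (2 * Fintype.card V - 1) ↪g subdiv G) := by
  classical
  obtain ⟨a, b, p, hp, hsup⟩ := h
  have hnd := hp.support_nodup
  have hednd := hp.isTrail.edges_nodup
  have hlen : p.support.length = Fintype.card V := by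
    rw [← List.toFinset_card_of_nodup hnd]
    have : p.support.toFinset = Finset.univ :=
      Finset.eq_univ_iff_forall.mpr (fun x => List.mem_toFinset.mpr (hsup x))
    rw [this, Finset.card_univ]
  have helen : p.edges.length = Fintype.card V - 1 := by
    have h1 := p.length_support; have h2 := p.length_edges; omega
  set n := Fintype.card V with hn'
  have hbs : ∀ k : ℕ, k < 2*n-1 → k % 2 = 0 → k/2 < p.support.length := by
    intro k hk1 hk2; omega
  have hbe : ∀ k : ℕ, k < 2*n-1 → ¬ k % 2 = 0 → k/2 < p.edges.length := by
    intro k hk1 hk2; omega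
  refine ⟨⟨⟨fun i => if h : i.val % 2 = 0
      then Sum.inl (p.support[i.val/2]'(hbs i.val i.isLt h))
      else Sum.inr ⟨p.edges[i.val/2]'(hbe i.val i.isLt h),
        p.edges_subset_edgeSet (List.getElem_mem _)⟩, ?_⟩, ?_⟩⟩
  · intro i j hij
    have hi := i.isLt; have hj := j.isLt
    dsimp only at hij
    by_cases h1 : i.val % 2 = 0 <;> by_cases h2 : j.val % 2 = 0
    · rw [dif_pos h1, dif_pos h2, Sum.inl.injEq, hnd.getElem_inj_iff] at hij
      exact Fin.ext (by omega)
    · rw [dif_pos h1, dif_neg h2] at hij; exact absurd hij (by simp)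
    · rw [dif_neg h1, dif_pos h2] at hij; exact absurd hij (by simp)
    · rw [dif_neg h1, dif_neg h2, Sum.inr.injEq, Subtype.mk.injEq,
        hednd.getElem_inj_iff] at hij
      exact Fin.ext (by omega)
  · intro i j
    have hi := i.isLt; have hj := j.isLt
    rw [pathGraph_adj]
    show (subdiv G).Adj (if h : i.val % 2 = 0 then Sum.inl (p.support[i.val/2]'(hbs i.val i.isLt h)) else Sum.inr ⟨p.edges[i.val/2]'(hbe i.val i.isLt h), p.edges_subset_edgeSet (List.getElem_mem _)⟩)
      (if h : j.val % 2 = 0 then Sum.inl (p.support[j.val/2]'(hbs j.val j.isLt h)) else Sum.inr ⟨p.edges[j.val/2]'(hbe j.val j.isLt h), p.edges_subset_edgeSet (List.getElem_mem _)⟩) ↔ _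
    by_cases h1 : i.val % 2 = 0 <;> by_cases h2 : j.val % 2 = 0
    · rw [dif_pos h1, dif_pos h2, iff_false_intro (subdiv_adj_ll G _ _)]
      constructor
      · exact fun hc => hc.elim
      · intro hc; omega
    · rw [dif_pos h1, dif_neg h2, subdiv_adj_lr]
      dsimp only
      rw [walk_edges_getElem p (j.val/2) (by omega) (by omega) (by omega)]
      rw [Sym2.mem_iff, hnd.getElem_inj_iff, hnd.getElem_inj_iff]
      constructor <;> intro hc <;> omega
    · rw [dif_neg h1, dif_pos h2, (subdiv G).adj_comm, subdiv_adj_lr]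
      dsimp only
      rw [walk_edges_getElem p (i.val/2) (by omega) (by omega) (by omega)]
      rw [Sym2.mem_iff, hnd.getElem_inj_iff, hnd.getElem_inj_iff]
      constructor <;> intro hc <;> omega
    · rw [dif_neg h1, dif_neg h2, iff_false_intro (subdiv_adj_rr G _ _)]
      constructor
      · exact fun hc => hc.elim
      · intro hc; omega

theorem stmt_0 {V : Type} [Fintype V] (G : SimpleGraph V) (hn : 2 ≤ Fintype.card V) :
    HasHamPath G ↔
      Nonempty (pathGraph (2 * Fintype.card V - 1) ↪g subdiv G) := by
  exact ⟨fun h => fwd_dir G hn h, fun h => bwd_dir G hn h⟩
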